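/- Let G be an abelian group generated by elements g_1, g_2, …, g_t, let f : G → ℂ, and let n_1, …, n_t be natural numbers such that Δ_{g_i}^{n_i+1} f(x) = 0 for all x ∈ G and all i = 1, …, t. Set N = n_1 + n_2 + ⋯ + n_t + t − 1. Then Δ_y^{N+1} f(x) = 0 for all x, y ∈ G. -/

import Mathlib

/-- The forward difference operator: `(Δ_h f)(x) = f(x + h) - f(x)`. -/
def fdiff {G M : Type*} [Add G] [Sub M] (h : G) (f : G → M) : G → M :=
  fun x => f (x + h) - f x

section Aux

variable {G : Type*} [AddCommGroup G]

/-- Shift operator as an additive hom. -/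
def shiftH (h : G) : (G → ℂ) →+ (G → ℂ) where
  toFun f := fun x => f (x + h)
  map_zero' := rfl
  map_add' _ _ := rfl

/-- Difference operator as an additive hom. -/
def fdiffH (h : G) : (G → ℂ) →+ (G → ℂ) where
  toFun f := fdiff h f
  map_zero' := by funext x; simp [fdiff]
  map_add' a b := by funext x; simp [fdiff]; ring

@[simp] lemma fdiffH_apply (h : G) (f : G → ℂ) : fdiffH h f = fdiff h f := rfl

@[simp] lemma shiftH_apply (h : G) (f : G → ℂ) (x : G) : shiftH h f x = f (x + h) := rfl

lemma shiftH_zero (f : G → ℂ) : shiftH (0 : G) f = f := by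
  funext x; simp

lemma shiftH_shiftH (h h' : G) (f : G → ℂ) :
    shiftH h (shiftH h' f) = shiftH (h + h') f := by
  funext x; simp [add_assoc]

lemma fdiff_comm (a b : G) (f : G → ℂ) : fdiff a (fdiff b f) = fdiff b (fdiff a f) := by
  funext x; simp [fdiff, add_right_comm]; ring

lemma fdiff_shiftH (a h : G) (f : G → ℂ) :
    fdiff a (shiftH h f) = shiftH h (fdiff a f) := by
  funext x; simp [fdiff, add_right_comm]

variable {t : ℕ} (g : Fin t → G)

/-- Apply the difference operators indexed by a list. -/
def applyListH (l : List (Fin t)) : (G → ℂ) →+ (G → ℂ) :=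
  l.foldr (fun i F => (fdiffH (g i)).comp F) (AddMonoidHom.id _)

@[simp] lemma applyListH_nil (f : G → ℂ) : applyListH g [] f = f := rfl

@[simp] lemma applyListH_cons (i : Fin t) (l : List (Fin t)) (f : G → ℂ) :
    applyListH g (i :: l) f = fdiff (g i) (applyListH g l f) := rfl

lemma applyListH_fdiff (l : List (Fin t)) (a : G) (f : G → ℂ) :
    applyListH g l (fdiff a f) = fdiff a (applyListH g l f) := by
  induction l with
  | nil => rfl
  | cons i l ih => simp [ih, fdiff_comm]

lemma applyListH_shiftH (l : List (Fin t)) (h : G) (f : G → ℂ) :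
    applyListH g l (shiftH h f) = shiftH h (applyListH g l f) := by
  induction l with
  | nil => rfl
  | cons i l ih => simp [ih, fdiff_shiftH]

lemma applyListH_append_singleton (l : List (Fin t)) (i : Fin t) (f : G → ℂ) :
    applyListH g (l ++ [i]) f = applyListH g l (fdiff (g i) f) := by
  induction l with
  | nil => rfl
  | cons j l ih => simp [ih]

lemma applyListH_erase (i : Fin t) (l : List (Fin t)) (f : G → ℂ) (hi : i ∈ l) :
    applyListH g l f = applyListH g (l.erase i) (fdiff (g i) f) := by
  induction l with
  | nil => simp at hi
  | cons j l ih =>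
    by_cases hji : j = i
    · subst hji
      rw [List.erase_cons_head]
      simp [applyListH_fdiff]
    · rw [List.erase_cons_tail (by simpa using hji)]
      have hi' : i ∈ l := by
        rcases List.mem_cons.mp hi with h | h
        · exact absurd h.symm hji
        · exact h
      simp [ih hi']

lemma applyListH_extract (i : Fin t) :
    ∀ (m : ℕ) (l : List (Fin t)) (f : G → ℂ), m ≤ l.count i →
      ∃ l' : List (Fin t), applyListH g l f = applyListH g l' ((fdiff (g i))^[m] f) := by
  intro m
  induction m with
  | zero => intro l f _; exact ⟨l, rfl⟩
  | succ m ih =>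
    intro l f hc
    have hi : i ∈ l := by
      by_contra h
      simp [List.count_eq_zero_of_not_mem h] at hc
    obtain ⟨l', hl'⟩ := ih (l.erase i) (fdiff (g i) f)
      (by have : List.count i (l.erase i) = List.count i l - 1 := List.count_erase_self; omega)
    refine ⟨l', ?_⟩
    rw [applyListH_erase g i l f hi, hl', Function.iterate_succ_apply]

lemma applyListH_eq_zero (i : Fin t) (l : List (Fin t)) (f : G → ℂ)
    (h0 : (fdiff (g i))^[l.count i] f = 0) :
    applyListH g l f = 0 := by
  obtain ⟨l', hl'⟩ := applyListH_extract g i (l.count i) l f le_rfl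
  rw [hl', h0, map_zero]

lemma list_length_eq_sum_count (l : List (Fin t)) : l.length = ∑ i, l.count i := by
  induction l with
  | nil => simp
  | cons a l ih =>
    simp [List.count_cons, ih, Finset.sum_add_distrib, beq_iff_eq,
      Finset.sum_ite_eq Finset.univ a (fun _ => 1)]

/-- Helper for mapping closures through additive homs. -/
lemma map_closure_mem (F : (G → ℂ) →+ (G → ℂ)) (S S' : Set (G → ℂ))
    (hF : ∀ a ∈ S, F a ∈ AddSubgroup.closure S') {φ : G → ℂ}
    (hφ : φ ∈ AddSubgroup.closure S) : F φ ∈ AddSubgroup.closure S' := by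
  have h1 : F φ ∈ (AddSubgroup.closure S).map F := AddSubgroup.mem_map_of_mem F hφ
  rw [AddMonoidHom.map_closure] at h1
  exact (AddSubgroup.closure_le _).mpr (fun b hb => by
    obtain ⟨a, ha, rfl⟩ := hb; exact hF a ha) h1

end Aux

theorem iterated_diff_of_generators {G : Type*} [AddCommGroup G] {t : ℕ}
    (g : Fin t → G) (hgen : AddSubgroup.closure (Set.range g) = ⊤)
    (f : G → ℂ) (n : Fin t → ℕ)
    (hdiff : ∀ i : Fin t, ∀ x : G, (fdiff (g i))^[n i + 1] f x = 0) :
    ∀ x y : G, (fdiff y)^[((∑ i, n i) + t - 1) + 1] f x = 0 := by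
  -- trivial group case
  rcases Nat.eq_zero_or_pos t with ht | ht
  · subst ht
    have hG : ∀ a : G, a = 0 := by
      intro a
      have : a ∈ AddSubgroup.closure (Set.range g) := hgen ▸ AddSubgroup.mem_top a
      have hrange : Set.range g = ∅ := by
        simp [Set.range_eq_empty]
      rw [hrange, AddSubgroup.closure_empty, AddSubgroup.mem_bot] at this
      exact this
    intro x y
    simp only [Finset.univ_eq_empty, Finset.sum_empty]
    simp [fdiff, hG y, Function.iterate_one]
  -- the set of k-fold differences (shifted)
  set S : ℕ → Set (G → ℂ) := fun k =>
    { φ | ∃ (l : List (Fin t)) (h : G), l.length = k ∧ φ = shiftH h (applyListH g l f) }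
    with hS
  -- basic membership: first differences
  have base : ∀ y : G, fdiff y f ∈ AddSubgroup.closure (S 1) := by
    have hsub : ∀ k h, ∀ φ ∈ S k, shiftH h φ ∈ S k := by
      rintro k h φ ⟨l, h', hl, rfl⟩
      exact ⟨l, h + h', hl, shiftH_shiftH h h' _⟩
    set K : AddSubgroup G :=
      { carrier := { y : G | fdiff y f ∈ AddSubgroup.closure (S 1) }
        zero_mem' := by
          have : fdiff (0 : G) f = 0 := by funext x; simp [fdiff]
          show fdiff (0 : G) f ∈ AddSubgroup.closure (S 1)
          rw [this]
          exact zero_mem _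
        add_mem' := by
          intro a b ha hb
          have key : fdiff (a + b) f = fdiff a f + shiftH a (fdiff b f) := by
            funext x
            simp only [fdiff, Pi.add_apply, shiftH_apply, ← add_assoc]
            ring
          show fdiff (a + b) f ∈ AddSubgroup.closure (S 1)
          rw [key]
          refine add_mem ha ?_
          exact map_closure_mem (shiftH a) (S 1) (S 1)
            (fun φ hφ => AddSubgroup.subset_closure (hsub 1 a φ hφ)) hb
        neg_mem' := by
          intro a ha
          have key : fdiff (-a) f = - shiftH (-a) (fdiff a f) := by
            funext x; simp [fdiff]
          show fdiff (-a) f ∈ AddSubgroup.closure (S 1)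
          rw [key]
          refine neg_mem ?_
          exact map_closure_mem (shiftH (-a)) (S 1) (S 1)
            (fun φ hφ => AddSubgroup.subset_closure (hsub 1 (-a) φ hφ)) ha } with hK
    intro y
    have hy : y ∈ K := by
      have : AddSubgroup.closure (Set.range g) ≤ K := by
        rw [AddSubgroup.closure_le]
        rintro _ ⟨i, rfl⟩
        show fdiff (g i) f ∈ AddSubgroup.closure (S 1)
        refine AddSubgroup.subset_closure ⟨[i], 0, rfl, ?_⟩
        rw [shiftH_zero]
        simp
      exact this (hgen ▸ AddSubgroup.mem_top y)
    exact hy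
  -- main induction
  have main : ∀ (k : ℕ) (y : G), (fdiff y)^[k] f ∈ AddSubgroup.closure (S k) := by
    intro k y
    induction k with
    | zero =>
      refine AddSubgroup.subset_closure ⟨[], 0, rfl, ?_⟩
      rw [shiftH_zero]; rfl
    | succ k ih =>
      rw [Function.iterate_succ_apply']
      have step : ∀ φ ∈ S k, fdiffH y φ ∈ AddSubgroup.closure (S (k + 1)) := by
        rintro φ ⟨l, h, hl, rfl⟩
        have e1 : fdiffH y (shiftH h (applyListH g l f)) =
            ((shiftH h).comp (applyListH g l)) (fdiff y f) := by
          simp only [AddMonoidHom.comp_apply, fdiffH_apply]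
          rw [fdiff_shiftH, applyListH_fdiff]
        rw [e1]
        refine map_closure_mem _ (S 1) (S (k + 1)) ?_ (base y)
        rintro _ ⟨l', h', hl', rfl⟩
        refine AddSubgroup.subset_closure ?_
        obtain ⟨i, rfl⟩ : ∃ i, l' = [i] := by
          match l', hl' with
          | [i], _ => exact ⟨i, rfl⟩
        refine ⟨l ++ [i], h + h', by simp [hl], ?_⟩
        simp only [AddMonoidHom.comp_apply]
        rw [show (applyListH g [i] f : G → ℂ) = fdiff (g i) f by simp,
          applyListH_shiftH, shiftH_shiftH, applyListH_append_singleton]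
      exact map_closure_mem (fdiffH y) (S k) (S (k + 1)) step ih
  -- everything of degree ∑ (n i + 1) vanishes
  have hN : (∑ i, n i) + t - 1 + 1 = ∑ i, (n i + 1) := by
    rw [Finset.sum_add_distrib]
    simp only [Finset.sum_const, Finset.card_univ, Fintype.card_fin, smul_eq_mul, mul_one]
    omega
  intro x y
  have hmem := main ((∑ i, n i) + t - 1 + 1) y
  have hzero : S ((∑ i, n i) + t - 1 + 1) ⊆ {0} := by
    rintro _ ⟨l, h, hl, rfl⟩
    rw [hN] at hl
    -- pigeonhole: some i occurs at least n i + 1 times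
    have : ∃ i, n i + 1 ≤ l.count i := by
      by_contra hc
      push_neg at hc
      have h1 : ∑ i, l.count i ≤ ∑ i, n i := Finset.sum_le_sum (fun i _ => by
        have := hc i; omega)
      have h2 := list_length_eq_sum_count l
      have h3 : ∑ i, n i < ∑ i, (n i + 1) := by
        rw [Finset.sum_add_distrib]
        simp only [Finset.sum_const, Finset.card_univ, Fintype.card_fin, smul_eq_mul, mul_one]
        omega
      omega
    obtain ⟨i, hi⟩ := this
    have hf0 : (fdiff (g i))^[l.count i] f = 0 := by
      obtain ⟨m, hm⟩ := Nat.exists_eq_add_of_le hi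
      rw [hm, add_comm, Function.iterate_add_apply]
      have : (fdiff (g i))^[n i + 1] f = 0 := funext (hdiff i)
      rw [this]
      apply Function.iterate_fixed
      funext x; simp [fdiff]
    have : applyListH g l f = 0 := applyListH_eq_zero g i l f hf0
    rw [this, map_zero]
    rfl
  have : AddSubgroup.closure (S ((∑ i, n i) + t - 1 + 1)) ≤ ⊥ := by
    rw [← AddSubgroup.closure_singleton_zero]
    exact AddSubgroup.closure_mono hzero
  have h0 : (fdiff y)^[(∑ i, n i) + t - 1 + 1] f = 0 := by
    have := this hmem
    rwa [AddSubgroup.mem_bot] at this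
  rw [h0]
  rfl
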